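/- Let p be a prime, n ≥ 1, let M be a finite abelian group acted on by automorphisms by a cyclic group ⟨φ⟩ of order p^n, let k be an algebraically closed field whose characteristic does not divide the order of the semidirect product M ⋊ ⟨φ⟩, and let U be an irreducible k[M ⋊ ⟨φ⟩]-module on which the subgroup [M, φ^{p^{n-1}}] acts non-trivially. Then U is a free k⟨φ⟩-module, i.e., a direct sum of copies of the group algebra k⟨φ⟩. -/

import Mathlib

open Module


/-- The subgroup `[M, ψ]` generated by all commutators `x⁻¹ · ψ(x)`. -/
def commutatorWithAut {M : Type*} [Group M] (ψ : MulAut M) : Subgroup M :=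
  Subgroup.closure {y : M | ∃ x : M, y = x⁻¹ * ψ x}

/-- Common eigenvector for a finite commuting family over an algebraically closed field. -/
lemma exists_common_eigenvector' {k : Type} [Field k] [IsAlgClosed k]
    {V : Type} [AddCommGroup V] [Module k V] [FiniteDimensional k V] [Nontrivial V]
    {ι : Type} [Fintype ι] (f : ι → Module.End k V)
    (hcomm : ∀ i j, Commute (f i) (f j)) :
    ∃ (χ : ι → k) (v : V), v ≠ 0 ∧ ∀ i, f i v = χ i • v := by
  classical
  have key : ∀ l : List ι, ∃ W : Submodule k V, W ≠ ⊥ ∧ (∀ i, ∀ v ∈ W, f i v ∈ W) ∧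
      (∀ i ∈ l, ∃ c : k, ∀ v ∈ W, f i v = c • v) := by
    intro l
    induction l with
    | nil => exact ⟨⊤, by simp, fun _ _ _ => trivial, by simp⟩
    | cons i l ih =>
      obtain ⟨W, hW0, hWinv, hWl⟩ := ih
      haveI : Nontrivial W := Submodule.nontrivial_iff_ne_bot.mpr hW0
      let g : Module.End k W := (f i).restrict (hWinv i)
      obtain ⟨μ, hμ⟩ := Module.End.exists_eigenvalue g
      obtain ⟨⟨v, hvW⟩, hv⟩ := hμ.exists_hasEigenvector
      have hvne : v ≠ 0 := by
        intro h; apply hv.2; ext; exact h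
      have hveig : f i v = μ • v := by
        have := hv.1
        rw [Module.End.mem_eigenspace_iff] at this
        exact congrArg Subtype.val this
      refine ⟨W ⊓ Module.End.eigenspace (f i) μ, ?_, ?_, ?_⟩
      · intro h
        have : v ∈ W ⊓ Module.End.eigenspace (f i) μ :=
          Submodule.mem_inf.mpr ⟨hvW, Module.End.mem_eigenspace_iff.mpr hveig⟩
        rw [h] at this
        exact hvne this
      · intro j u hu
        obtain ⟨huW, hue⟩ := Submodule.mem_inf.mp hu
        rw [Module.End.mem_eigenspace_iff] at hue
        refine Submodule.mem_inf.mpr ⟨hWinv j u huW, Module.End.mem_eigenspace_iff.mpr ?_⟩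
        have : f i (f j u) = f j (f i u) := by
          have := hcomm i j
          exact congrFun (congrArg DFunLike.coe this) u
        rw [this, hue, map_smul]
      · rintro i' hi'
        rcases List.mem_cons.mp hi' with rfl | hi'
        · exact ⟨μ, fun v hv => Module.End.mem_eigenspace_iff.mp (Submodule.mem_inf.mp hv).2⟩
        · obtain ⟨c, hc⟩ := hWl i' hi'
          exact ⟨c, fun v hv => hc v (Submodule.mem_inf.mp hv).1⟩
  obtain ⟨W, hW0, _, hWl⟩ := key Finset.univ.toList
  choose χ hχ using fun i => hWl i (by simp)
  obtain ⟨v, hvW, hvne⟩ := Submodule.exists_mem_ne_zero_of_ne_bot hW0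
  exact ⟨χ, v, hvne, fun i => hχ i v hvW⟩

theorem irreducible_module_is_free_over_cyclic_group :
    ∀ (p n : ℕ), p.Prime → 1 ≤ n →
      ∀ (M : Type) [CommGroup M] [Finite M],
        ∀ φ : MulAut M, orderOf φ = p ^ n →
          ∀ (k : Type) [Field k] [IsAlgClosed k],
            -- the characteristic of `k` does not divide the order of `M ⋊ ⟨φ⟩`
            ¬ (ringChar k ∣
                Nat.card (M ⋊[(Subgroup.zpowers φ).subtype] ↥(Subgroup.zpowers φ))) →
            ∀ (U : Type) [AddCommGroup U] [Module k U],
              ∀ ρ : Representation k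
                  (M ⋊[(Subgroup.zpowers φ).subtype] ↥(Subgroup.zpowers φ)) U,
                -- `U` is irreducible
                (∃ u : U, u ≠ 0) →
                (∀ W : Submodule k U,
                  (∀ (h : M ⋊[(Subgroup.zpowers φ).subtype] ↥(Subgroup.zpowers φ)),
                    ∀ u ∈ W, ρ h u ∈ W) → W = ⊥ ∨ W = ⊤) →
                -- `[M, φ^{p^{n-1}}]` acts non-trivially on `U`
                (∃ x ∈ commutatorWithAut (φ ^ p ^ (n - 1)), ∃ u : U,
                    ρ (SemidirectProduct.inl x) u ≠ u) →
                -- `U` is a free `k⟨φ⟩`-module: it has a `k`-basis permuted by `φ`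
                -- with all orbits regular
                ∃ (ι : Type) (b : Basis (ι × ZMod (p ^ n)) k U),
                  ∀ (i : ι) (j : ZMod (p ^ n)),
                    ρ (SemidirectProduct.inr ⟨φ, Subgroup.mem_zpowers φ⟩) (b (i, j)) =
                      b (i, j + 1) := by
  classical
  intro p n hp hn M _ _ φ hφ k _ _ _hchar U _ _ ρ hU0 hirr hnontriv
  obtain ⟨u₀, hu₀⟩ := hU0
  haveI : Nontrivial U := nontrivial_of_ne u₀ 0 hu₀
  set q : ℕ := p ^ n with hq
  have hq1 : 1 < q := Nat.one_lt_pow (by omega) hp.one_lt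
  have hq0 : q ≠ 0 := by omega
  haveI : NeZero q := ⟨hq0⟩
  -- the group
  set G := M ⋊[(Subgroup.zpowers φ).subtype] ↥(Subgroup.zpowers φ) with hG
  have hφq : φ ^ q = 1 := by rw [← hφ]; exact pow_orderOf_eq_one φ
  haveI : Finite (Subgroup.zpowers φ) := by
    have : IsOfFinOrder φ := by
      rw [← orderOf_pos_iff, hφ]; exact Nat.pos_of_ne_zero hq0
    exact this.finite_zpowers
  haveI : Finite G := Finite.of_injective
    (fun g : G => (g.left, g.right)) (by
      intro a b hab
      simp only [Prod.mk.injEq] at hab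
      exact SemidirectProduct.ext hab.1 hab.2)
  -- basic elements
  set gφ : ↥(Subgroup.zpowers φ) := ⟨φ, Subgroup.mem_zpowers φ⟩ with hgφ
  set f : M → Module.End k U := fun x => ρ (SemidirectProduct.inl x) with hf
  set T : Module.End k U := ρ (SemidirectProduct.inr gφ) with hT
  have hgφq : gφ ^ q = 1 :=
    Subtype.ext (by rw [SubmonoidClass.coe_pow]; exact hφq)
  have hTq : T ^ q = 1 := by
    rw [hT, ← map_pow, ← map_pow, hgφq, map_one, map_one]
  have hTmod : ∀ a : ℕ, T ^ (a % q) = T ^ a := by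
    intro a
    conv_rhs => rw [← Nat.div_add_mod a q]
    rw [pow_add, pow_mul, hTq, one_pow, one_mul]
  -- finite dimensionality
  haveI hfd : FiniteDimensional k U := by
    set W := Submodule.span k (Set.range fun g : G => ρ g u₀) with hW
    have hWinv : ∀ h : G, ∀ u ∈ W, ρ h u ∈ W := by
      intro h u hu
      have hle : Submodule.map (ρ h) W ≤ W := by
        rw [hW, Submodule.map_span]
        apply Submodule.span_mono
        rintro _ ⟨_, ⟨g, rfl⟩, rfl⟩
        refine ⟨h * g, ?_⟩
        show ρ (h * g) u₀ = ρ h (ρ g u₀)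
        rw [map_mul]; rfl
      exact hle ⟨u, hu, rfl⟩
    have hWne : W ≠ ⊥ := by
      intro hbot
      apply hu₀
      have : u₀ ∈ W := Submodule.subset_span ⟨1, by show ρ 1 u₀ = u₀; rw [map_one]; rfl⟩
      rwa [hbot, Submodule.mem_bot] at this
    have hWtop : W = ⊤ := (hirr W hWinv).resolve_left hWne
    haveI : FiniteDimensional k W := FiniteDimensional.span_of_finite k (Set.finite_range _)
    exact Module.Finite.equiv (LinearEquiv.ofTop W hWtop)
  -- commuting family
  have hcomm : ∀ x y : M, Commute (f x) (f y) := by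
    intro x y
    rw [hf]
    show ρ _ * ρ _ = ρ _ * ρ _
    rw [← map_mul, ← map_mul, ← map_mul, ← map_mul, mul_comm x y]
  haveI : Fintype M := Fintype.ofFinite M
  obtain ⟨χ, v, hvne, hv⟩ := exists_common_eigenvector' f hcomm
  -- multiplicativity of χ
  have hcan : ∀ c d : k, c • v = d • v → c = d := by
    intro c d hcd
    have h0 : (c - d) • v = 0 := by rw [sub_smul, hcd, sub_self]
    rcases smul_eq_zero.mp h0 with h | h
    · exact sub_eq_zero.mp h
    · exact absurd h hvne
  have hf1 : f 1 = 1 := by rw [hf]; show ρ (SemidirectProduct.inl 1) = 1; rw [map_one, map_one]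
  have hfmul : ∀ x y : M, f (x * y) = f x * f y := by
    intro x y
    show ρ (SemidirectProduct.inl (x * y)) = ρ (SemidirectProduct.inl x) * ρ (SemidirectProduct.inl y)
    rw [map_mul, map_mul]
  have hχ1 : χ 1 = 1 := by
    apply hcan
    rw [← hv 1, hf1, one_smul]; rfl
  have hχmul : ∀ x y : M, χ (x * y) = χ x * χ y := by
    intro x y
    apply hcan
    calc χ (x * y) • v = f (x * y) v := (hv _).symm
      _ = f x (f y v) := by rw [hfmul]; rfl
      _ = f x (χ y • v) := by rw [hv]
      _ = χ y • f x v := map_smul _ _ _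
      _ = χ y • χ x • v := by rw [hv]
      _ = (χ x * χ y) • v := by rw [smul_smul, mul_comm]
  have hχne : ∀ x : M, χ x ≠ 0 := by
    intro x hx
    have : χ x * χ x⁻¹ = 1 := by rw [← hχmul, mul_inv_cancel, hχ1]
    rw [hx, zero_mul] at this
    exact zero_ne_one this
  -- conjugation identity
  have hstep : ∀ (x : M) (u : U), f x (T u) = T (f (φ⁻¹ x) u) := by
    intro x u
    have key : SemidirectProduct.inl x * SemidirectProduct.inr gφ
        = (SemidirectProduct.inr gφ * SemidirectProduct.inl (φ⁻¹ x) :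
          M ⋊[(Subgroup.zpowers φ).subtype] ↥(Subgroup.zpowers φ)) := by
      have := SemidirectProduct.inl_aut (φ := (Subgroup.zpowers φ).subtype) gφ (φ⁻¹ x)
      have h2 : (Subgroup.zpowers φ).subtype gφ (φ⁻¹ x) = x := by
        show φ (φ⁻¹ x) = x
        simp
      rw [h2] at this
      rw [this, mul_assoc, mul_assoc, ← map_mul, inv_mul_cancel, map_one, mul_one]
    calc f x (T u) = (ρ (SemidirectProduct.inl x) * ρ (SemidirectProduct.inr gφ)) u := rfl
      _ = ρ (SemidirectProduct.inl x * SemidirectProduct.inr gφ) u := by rw [map_mul]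
      _ = ρ (SemidirectProduct.inr gφ * SemidirectProduct.inl (φ⁻¹ x)) u := by rw [key]
      _ = (ρ (SemidirectProduct.inr gφ) * ρ (SemidirectProduct.inl (φ⁻¹ x))) u := by rw [map_mul]
      _ = T (f (φ⁻¹ x) u) := rfl
  have hconj : ∀ (j : ℕ) (x : M) (u : U),
      f x ((T ^ j) u) = (T ^ j) (f ((φ⁻¹ ^ j) x) u) := by
    intro j
    induction j with
    | zero => intro x u; simp
    | succ j ih =>
      intro x u
      have e2 : ∀ w : U, (T ^ (j + 1)) w = T ((T ^ j) w) := by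
        intro w; rw [pow_succ']; rfl
      rw [e2, hstep, ih, e2]
      have : (φ⁻¹ ^ j) (φ⁻¹ x) = (φ⁻¹ ^ (j + 1)) x := by rw [pow_succ]; rfl
      rw [this]
  -- simultaneous eigenspace
  set Uχ : Submodule k U :=
    { carrier := {u : U | ∀ x : M, f x u = χ x • u},
      add_mem' := fun ha hb x => by
        rw [map_add, ha x, hb x, smul_add]
      zero_mem' := fun x => by rw [map_zero, smul_zero]
      smul_mem' := fun c u hu x => by
        rw [map_smul, hu x, smul_comm] } with hUχ
  have hvUχ : v ∈ Uχ := hv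
  have heig : ∀ (j : ℕ) (x : M), ∀ u ∈ Uχ,
      f x ((T ^ j) u) = χ ((φ⁻¹ ^ j) x) • (T ^ j) u := by
    intro j x u hu
    rw [hconj, hu ((φ⁻¹ ^ j) x), map_smul]
  set V : ZMod q → Submodule k U := fun j => Submodule.map (T ^ j.val) Uχ with hV
  have hVnat : ∀ a : ℕ, Submodule.map (T ^ a) Uχ = V ((a : ZMod q)) := by
    intro a
    show _ = Submodule.map (T ^ (ZMod.val ((a : ℕ) : ZMod q))) Uχ
    rw [ZMod.val_natCast, hTmod]
  set Wsup : Submodule k U := ⨆ j : ZMod q, V j with hWsup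
  have hfxV : ∀ (x : M) (j : ZMod q), Submodule.map (f x) (V j) ≤ V j := by
    intro x j y hy
    obtain ⟨w, hwVj, rfl⟩ := hy
    obtain ⟨u, huUχ, rfl⟩ := hwVj
    rw [heig _ _ _ huUχ]
    exact Submodule.smul_mem _ _ ⟨u, huUχ, rfl⟩
  have hTV : ∀ (m : ℕ) (j : ZMod q), Submodule.map (T ^ m) (V j) ≤ Wsup := by
    intro m j
    have e : Submodule.map (T ^ m) (V j) = Submodule.map (T ^ (m + j.val)) Uχ := by
      show Submodule.map (T ^ m) (Submodule.map (T ^ j.val) Uχ) = _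
      rw [← Submodule.map_comp, ← Module.End.mul_eq_comp, ← pow_add]
    rw [e, hVnat]
    exact le_iSup V _
  have hWsupInv : ∀ h : G, ∀ u ∈ Wsup, ρ h u ∈ Wsup := by
    intro h u hu
    obtain ⟨m, hm⟩ : ∃ m : ℕ, ρ (SemidirectProduct.inr h.right) = T ^ m := by
      obtain ⟨mz, hmz⟩ := h.right.2
      have h1 : gφ ^ mz = h.right := Subtype.ext (by rw [SubgroupClass.coe_zpow]; exact hmz)
      set m := (mz % (q : ℤ)).toNat with hmdef
      have hq0' : (q : ℤ) ≠ 0 := Int.natCast_ne_zero.mpr hq0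
      have hmz' : (m : ℤ) = mz % (q : ℤ) := Int.toNat_of_nonneg (Int.emod_nonneg mz hq0')
      have h2 : gφ ^ mz = gφ ^ m := by
        conv_lhs => rw [← Int.mul_ediv_add_emod mz (q : ℤ)]
        rw [zpow_add, zpow_mul, zpow_natCast, hgφq, one_zpow, one_mul, ← hmz', zpow_natCast]
      refine ⟨m, ?_⟩
      rw [← h1, h2, map_pow, map_pow]
    have hdecomp : ρ h = f h.left * (T ^ m) := by
      conv_lhs => rw [← SemidirectProduct.inl_left_mul_inr_right h]
      rw [map_mul, hm]
    have hmap1 : Submodule.map (T ^ m) Wsup ≤ Wsup := by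
      rw [hWsup, Submodule.map_iSup]
      exact iSup_le fun j => hTV m j
    have hmap2 : Submodule.map (f h.left) Wsup ≤ Wsup := by
      rw [hWsup, Submodule.map_iSup]
      exact iSup_le fun j => le_trans (hfxV h.left j) (le_iSup V j)
    have : ρ h u = f h.left ((T ^ m) u) := by rw [hdecomp]; rfl
    rw [this]
    exact hmap2 ⟨(T ^ m) u, hmap1 ⟨u, hu, rfl⟩, rfl⟩
  have hvV0 : v ∈ V 0 := by
    refine ⟨v, hvUχ, ?_⟩
    rw [ZMod.val_zero, pow_zero]
    rfl
  have hWne : Wsup ≠ ⊥ := by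
    intro hbot
    have : v ∈ Wsup := le_iSup V 0 hvV0
    rw [hbot, Submodule.mem_bot] at this
    exact hvne this
  have hWtop : Wsup = ⊤ := (hirr Wsup hWsupInv).resolve_left hWne
  -- non-trivial action rules out fixed characters
  have hψcontra : ¬ (∀ y : M, χ ((φ ^ p ^ (n - 1)) y) = χ y) := by
    intro hψfix
    obtain ⟨z₀, hz₀mem, u₁, hz₀⟩ := hnontriv
    have hcommψ : ∀ (j : ℕ) (x : M),
        (φ⁻¹ ^ j) ((φ ^ p ^ (n - 1)) x) = (φ ^ p ^ (n - 1)) ((φ⁻¹ ^ j) x) := by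
      intro j x
      have hc : (φ⁻¹ ^ j) * (φ ^ p ^ (n - 1)) = (φ ^ p ^ (n - 1)) * (φ⁻¹ ^ j) :=
        Commute.pow_pow ((Commute.refl φ).inv_left) j _
      calc (φ⁻¹ ^ j) ((φ ^ p ^ (n - 1)) x) = ((φ⁻¹ ^ j) * (φ ^ p ^ (n - 1))) x := rfl
        _ = ((φ ^ p ^ (n - 1)) * (φ⁻¹ ^ j)) x := by rw [hc]
        _ = (φ ^ p ^ (n - 1)) ((φ⁻¹ ^ j) x) := rfl
    have hkill : ∀ (j : ℕ), ∀ z ∈ commutatorWithAut (φ ^ p ^ (n - 1)),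
        χ ((φ⁻¹ ^ j) z) = 1 := by
      intro j
      set lj : M →* kˣ :=
        { toFun := fun x => Units.mk0 (χ ((φ⁻¹ ^ j) x)) (hχne _)
          map_one' := by ext; simp [hχ1]
          map_mul' := fun x y => by ext; simp [hχmul] } with hlj
      have hle : commutatorWithAut (φ ^ p ^ (n - 1)) ≤ lj.ker := by
        rw [commutatorWithAut]
        apply (Subgroup.closure_le _).mpr
        rintro _ ⟨x, rfl⟩
        have h1 : lj ((φ ^ p ^ (n - 1)) x) = lj x := by
          ext
          show χ ((φ⁻¹ ^ j) ((φ ^ p ^ (n - 1)) x)) = χ ((φ⁻¹ ^ j) x)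
          rw [hcommψ]
          exact hψfix _
        rw [SetLike.mem_coe, MonoidHom.mem_ker, map_mul, map_inv, h1, inv_mul_cancel]
      intro z hz
      have hz1 := hle hz
      rw [MonoidHom.mem_ker] at hz1
      exact congrArg Units.val hz1
    have htriv : ∀ u : U, f z₀ u = u := by
      intro u
      have hE : Wsup ≤ LinearMap.eqLocus (f z₀) LinearMap.id := by
        rw [hWsup]
        apply iSup_le
        intro j y hy
        obtain ⟨w, hw, rfl⟩ := hy
        show f z₀ ((T ^ _) w) = (T ^ _) w
        rw [heig _ _ _ hw, hkill _ _ hz₀mem, one_smul]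
      exact hE (hWtop ▸ Submodule.mem_top)
    exact hz₀ (htriv u₁)
  -- the characters χ_j are pairwise distinct
  have hkey : ∀ a b : ℕ, a < b → b < q →
      (∀ x, χ ((φ⁻¹ ^ a) x) = χ ((φ⁻¹ ^ b) x)) → False := by
    intro a b hab hbq heqf
    set d := b - a with hd
    have hd0 : 0 < d := by omega
    have hdq : d < q := by omega
    have hfix : ∀ y : M, χ ((φ ^ d) y) = χ y := by
      intro y
      have hy := heqf ((φ ^ b) y)
      have e1 : (φ⁻¹ ^ b) ((φ ^ b) y) = y := by
        show ((φ⁻¹ ^ b) * (φ ^ b)) y = y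
        rw [inv_pow, inv_mul_cancel]
        rfl
      have e2 : (φ⁻¹ ^ a) ((φ ^ b) y) = (φ ^ d) y := by
        show ((φ⁻¹ ^ a) * (φ ^ b)) y = (φ ^ d) y
        have e3 : (φ⁻¹ ^ a) * (φ ^ b) = φ ^ d := by
          rw [inv_pow]
          have e4 : φ ^ b = φ ^ a * φ ^ d := by rw [← pow_add]; congr 1; omega
          rw [e4, inv_mul_cancel_left]
        rw [e3]
      rw [e1, e2] at hy
      exact hy
    set A : AddSubgroup ℤ :=
      { carrier := {m : ℤ | ∀ y : M, χ ((φ ^ m) y) = χ y}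
        zero_mem' := fun y => by rw [zpow_zero]; rfl
        add_mem' := fun {a'} {b'} ha hb y => by
          have e : (φ ^ (a' + b')) y = (φ ^ a') ((φ ^ b') y) := by rw [zpow_add]; rfl
          rw [e, ha, hb]
        neg_mem' := fun {a'} ha y => by
          have hy := ha ((φ ^ (-a')) y)
          have e : (φ ^ a') ((φ ^ (-a')) y) = y := by
            show ((φ ^ a') * (φ ^ (-a'))) y = y
            rw [← zpow_add, add_neg_cancel, zpow_zero]
            rfl
          rw [e] at hy
          exact hy.symm } with hA
    have hdA : (d : ℤ) ∈ A := fun y => by rw [zpow_natCast]; exact hfix y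
    have hqA : (q : ℤ) ∈ A := fun y => by rw [zpow_natCast, hφq]; rfl
    have hgcdA : ((Nat.gcd d q : ℕ) : ℤ) ∈ A := by
      have hbez := Int.gcd_eq_gcd_ab (d : ℤ) (q : ℤ)
      have h1 : ((Int.gcd (d : ℤ) (q : ℤ) : ℕ) : ℤ) ∈ A := by
        rw [hbez]
        refine A.add_mem ?_ ?_
        · have := A.zsmul_mem hdA (Int.gcdA (d : ℤ) (q : ℤ))
          rwa [smul_eq_mul, mul_comm] at this
        · have := A.zsmul_mem hqA (Int.gcdB (d : ℤ) (q : ℤ))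
          rwa [smul_eq_mul, mul_comm] at this
      simpa using h1
    have hgdvd : Nat.gcd d q ∣ p ^ (n - 1) := by
      have hgq : Nat.gcd d q ∣ q := Nat.gcd_dvd_right d q
      obtain ⟨s, hs, hgs⟩ := (Nat.dvd_prime_pow hp).mp (hq ▸ hgq)
      have hsn : s ≠ n := by
        intro hsn
        have hgd : Nat.gcd d q ∣ d := Nat.gcd_dvd_left d q
        have : Nat.gcd d q ≤ d := Nat.le_of_dvd hd0 hgd
        rw [hgs, hsn, ← hq] at this
        omega
      rw [hgs]
      exact pow_dvd_pow p (by omega)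
    obtain ⟨t, ht⟩ := hgdvd
    have hpA : ((p ^ (n - 1) : ℕ) : ℤ) ∈ A := by
      have hmem := A.zsmul_mem hgcdA (t : ℤ)
      rw [smul_eq_mul, mul_comm] at hmem
      have : ((p ^ (n - 1) : ℕ) : ℤ) = ((Nat.gcd d q : ℕ) : ℤ) * (t : ℤ) := by
        rw [← Nat.cast_mul, ← ht]
      rwa [← this] at hmem
    apply hψcontra
    intro y
    have hy := hpA y
    rwa [zpow_natCast] at hy
  have hinj : Function.Injective (fun j : ZMod q => fun x : M => χ ((φ⁻¹ ^ j.val) x)) := by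
    intro j j' heq
    by_contra hne
    have hvv : j.val ≠ j'.val := fun h => hne (ZMod.val_injective q h)
    rcases Nat.lt_or_ge j.val j'.val with h | h
    · exact hkey j.val j'.val h (ZMod.val_lt j') (fun x => congrFun heq x)
    · exact hkey j'.val j.val (lt_of_le_of_ne h (Ne.symm hvv)) (ZMod.val_lt j)
        (fun x => (congrFun heq x).symm)
  -- independence
  have hmapsTo : ∀ (x y : M) (μ : k),
      Set.MapsTo (f x) ((f y).maxGenEigenspace μ) ((f y).maxGenEigenspace μ) :=
    fun x y μ => Module.End.mapsTo_maxGenEigenspace_of_comm (hcomm y x) μ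
  have hindAll : iSupIndep (fun χ' : M → k => ⨅ x : M, (f x).maxGenEigenspace (χ' x)) :=
    Module.End.independent_iInf_maxGenEigenspace_of_forall_mapsTo f hmapsTo
  have hVle : ∀ j : ZMod q,
      V j ≤ ⨅ x : M, (f x).maxGenEigenspace (χ ((φ⁻¹ ^ j.val) x)) := by
    intro j y hy
    obtain ⟨w, hw, rfl⟩ := hy
    rw [Submodule.mem_iInf]
    intro x
    rw [Module.End.mem_maxGenEigenspace]
    refine ⟨1, ?_⟩
    rw [pow_one, LinearMap.sub_apply, LinearMap.smul_apply, Module.End.one_apply,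
      heig _ _ _ hw, sub_self]
  have hind : iSupIndep V :=
    ((hindAll.comp hinj).mono (fun j => hVle j) : _)
  have hInternal : DirectSum.IsInternal V :=
    DirectSum.isInternal_submodule_of_iSupIndep_of_iSup_eq_top hind hWtop
  -- T as a linear equivalence
  set Tinv : Module.End k U := ρ (SemidirectProduct.inr gφ⁻¹) with hTinv
  have hTT1 : T ∘ₗ Tinv = LinearMap.id := by
    rw [← Module.End.mul_eq_comp, hT, hTinv, ← map_mul, ← map_mul, mul_inv_cancel,
      map_one, map_one]
    rfl
  have hTT2 : Tinv ∘ₗ T = LinearMap.id := by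
    rw [← Module.End.mul_eq_comp, hT, hTinv, ← map_mul, ← map_mul, inv_mul_cancel,
      map_one, map_one]
    rfl
  set Teq : U ≃ₗ[k] U := LinearEquiv.ofLinear T Tinv hTT1 hTT2 with hTeq
  have hTeqapp : ∀ (m : ℕ) (u : U), (Teq ^ m) u = (T ^ m) u := by
    intro m u
    rw [LinearEquiv.pow_apply, Module.End.pow_apply]
    have hco : ⇑Teq = ⇑T := rfl
    rw [hco]
  have hmapeq : ∀ j : ZMod q,
      Submodule.map ((Teq ^ j.val : U ≃ₗ[k] U) : U →ₗ[k] U) Uχ = V j := by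
    intro j
    have e : ((Teq ^ j.val : U ≃ₗ[k] U) : U →ₗ[k] U) = T ^ j.val :=
      LinearMap.ext (fun u => hTeqapp j.val u)
    rw [e]
  set e0 := Basis.ofVectorSpace k ↥Uχ with he0
  set ι : Type := ↥(Basis.ofVectorSpaceIndex k ↥Uχ) with hι
  set bases : ∀ j : ZMod q, Basis ι k ↥(V j) := fun j =>
    e0.map (((Teq ^ j.val).submoduleMap Uχ).trans (LinearEquiv.ofEq _ _ (hmapeq j)))
    with hbases
  set eqv : (Σ _ : ZMod q, ι) ≃ ι × ZMod q :=
    (Equiv.sigmaEquivProd (ZMod q) ι).trans (Equiv.prodComm (ZMod q) ι) with heqv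
  refine ⟨ι, (hInternal.collectedBasis bases).reindex eqv, ?_⟩
  have hb : ∀ (i : ι) (j : ZMod q),
      ((hInternal.collectedBasis bases).reindex eqv) (i, j) = (T ^ j.val) (e0 i : U) := by
    intro i j
    rw [Basis.reindex_apply]
    have he : eqv.symm (i, j) = ⟨j, i⟩ := rfl
    rw [he, hInternal.collectedBasis_coe bases]
    show ((bases j i : ↥(V j)) : U) = _
    rw [hbases]
    simp only [Basis.map_apply, LinearEquiv.trans_apply, LinearEquiv.coe_ofEq_apply,
      LinearEquiv.submoduleMap_apply]
    exact hTeqapp j.val (e0 i : U)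
  intro i j
  rw [hb i j, hb i (j + 1)]
  have h1 : T ((T ^ j.val) (e0 i : U)) = (T ^ (j.val + 1)) (e0 i : U) := by
    rw [pow_succ']
    rfl
  haveI : Fact (1 < q) := ⟨hq1⟩
  have h2 : (j + 1).val = (j.val + 1) % q := by
    rw [ZMod.val_add, ZMod.val_one]
  rw [h1, h2, hTmod]
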